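/- Let ε = 1/(32κ²√d) and ξ = 6. Conditioned on the events that for every 0 ≤ t ≤ n: max_{1≤i≤n} ‖W_i W^T Sᵗ‖_F ≤ (ξ/2)√d(√(nd)+√m+√(2γ n log n))², d_F(Sᵗ, S^{i,t}) ≤ ε√d for all 1 ≤ i ≤ n, and d_F(Sᵗ, Z) ≤ ε√(nd)/2, and conditioned on the contraction property that d_F(T(X),T(Y)) ≤ (1/2)d_F(X,Y) for all X, Y ∈ N_ε ∩ N_{ξ,∞} together with the Gaussian norm events ‖W‖ ≤ √(nd)+√m+√(2γ log n) and max_i ‖W_i‖ ≤ √d+√m+√(2γ log n), the GPM iterates satisfy Sᵗ ∈ N_ε ∩ N_{ξ,∞} for all t ≥ 0 and d_F(Sᵗ, S^{t−1}) ≤ (1/2)·d_F(S^{t−1}, S^{t−2}) ≤ 2^{−t+1}·d_F(S¹, S⁰) for all t ≥ 2. -/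

import Mathlib

open MeasureTheory Matrix Filter

namespace GOPP

/-- Frobenius norm of a real matrix. -/
noncomputable def frob {α β : Type*} [Fintype α] [Fintype β] (X : Matrix α β ℝ) : ℝ :=
  Real.sqrt (∑ i, ∑ j, X i j ^ 2)

/-- Euclidean norm of a vector. -/
noncomputable def vnorm {β : Type*} [Fintype β] (v : β → ℝ) : ℝ :=
  Real.sqrt (∑ j, v j ^ 2)

/-- Operator (spectral) norm: the supremum of ‖Xu‖ over unit vectors u. -/
noncomputable def opNorm {α β : Type*} [Fintype α] [Fintype β] (X : Matrix α β ℝ) : ℝ :=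
  sSup {r : ℝ | ∃ u : β → ℝ, vnorm u = 1 ∧ r = vnorm (X.mulVec u)}

/-- Smallest singular value: the infimum of ‖uᵀX‖ over unit vectors u (for a d×m matrix
with d ≤ m this is the d-th largest singular value; for square matrices it is σ_min). -/
noncomputable def sigmaMin {α β : Type*} [Fintype α] [Fintype β] (X : Matrix α β ℝ) : ℝ :=
  sInf {r : ℝ | ∃ u : α → ℝ, vnorm u = 1 ∧ r = vnorm (Matrix.vecMul u X)}

/-- Condition number κ = σ_max/σ_min. -/
noncomputable def kappa {d m : ℕ} (A : Matrix (Fin d) (Fin m) ℝ) : ℝ :=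
  opNorm A / sigmaMin A

/-- Q is an orthogonal matrix. -/
def IsOrth {d : ℕ} (Q : Matrix (Fin d) (Fin d) ℝ) : Prop :=
  Qᵀ * Q = 1 ∧ Q * Qᵀ = 1

/-- Nuclear norm, via the dual characterization ‖M‖_* = max_{Q ∈ O(d)} ⟨Q, M⟩. -/
noncomputable def nuclearNorm {d : ℕ} (M : Matrix (Fin d) (Fin d) ℝ) : ℝ :=
  sSup {r : ℝ | ∃ Q : Matrix (Fin d) (Fin d) ℝ, IsOrth Q ∧ r = Matrix.trace (Qᵀ * M)}

/-- The i-th d×k block of an (nd)×k block matrix. -/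
def blk {n d k : ℕ} (S : Matrix (Fin n × Fin d) (Fin k) ℝ) (i : Fin n) :
    Matrix (Fin d) (Fin k) ℝ :=
  Matrix.of fun a b => S (i, a) b

/-- The i-th diagonal d×d block of an (nd)×(nd) matrix. -/
def dblk {n d : ℕ} (G : Matrix (Fin n × Fin d) (Fin n × Fin d) ℝ) (i : Fin n) :
    Matrix (Fin d) (Fin d) ℝ :=
  Matrix.of fun a b => G (i, a) (i, b)

/-- S ∈ O(d)^{⊗n}: each of the n d×d blocks of S is orthogonal. -/
def OrthBlocks {n d : ℕ} (S : Matrix (Fin n × Fin d) (Fin d) ℝ) : Prop :=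
  ∀ i, IsOrth (blk S i)

/-- Z ∈ ℝ^{nd×d}: the vertical stack of n copies of I_d. -/
def ZStack (n d : ℕ) : Matrix (Fin n × Fin d) (Fin d) ℝ :=
  Matrix.of fun p j => if p.2 = j then 1 else 0

/-- Vertical stack of n given d×k matrices. -/
def stack {n d k : ℕ} (B : Fin n → Matrix (Fin d) (Fin k) ℝ) :
    Matrix (Fin n × Fin d) (Fin k) ℝ :=
  Matrix.of fun p b => B p.1 p.2 b

/-- d_F(X,Y) = min_{Q ∈ O(d)} ‖X − YQ‖_F. -/
noncomputable def dF {n d : ℕ} (X Y : Matrix (Fin n × Fin d) (Fin d) ℝ) : ℝ :=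
  sInf {r : ℝ | ∃ Q, IsOrth Q ∧ r = frob (X - Y * Q)}

/-- R is a polar factor P(X) of X: an orthogonal global minimizer of ‖X − Q‖_F over O(d). -/
def IsPolar {d : ℕ} (X R : Matrix (Fin d) (Fin d) ℝ) : Prop :=
  IsOrth R ∧ ∀ Q : Matrix (Fin d) (Fin d) ℝ, IsOrth Q → frob (X - R) ≤ frob (X - Q)

/-- S = P_n(X): blockwise polar factor. -/
def IsPolarBlocks {n d : ℕ} (X S : Matrix (Fin n × Fin d) (Fin d) ℝ) : Prop :=
  ∀ i, IsPolar (blk X i) (blk S i)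

/-- U collects (an orthonormal basis of the span of) the top d left singular vectors of D:
U has orthonormal columns and maximizes the Ky Fan quantity trace(Uᵀ(DDᵀ)U). -/
def IsTopSingVecs {N : Type*} [Fintype N] {d m : ℕ} (D : Matrix N (Fin m) ℝ)
    (U : Matrix N (Fin d) ℝ) : Prop :=
  Uᵀ * U = 1 ∧ ∀ Q : Matrix N (Fin d) ℝ, Qᵀ * Q = 1 →
    Matrix.trace (Qᵀ * (D * Dᵀ) * Q) ≤ Matrix.trace (Uᵀ * (D * Dᵀ) * U)

/-- (U, S, V) is a top-d singular triple of D: orthonormal U, V, diagonal nonnegative S,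
DV = US, DᵀU = VS, and U spans a top-d left singular subspace. -/
def IsSVDTriple {N : Type*} [Fintype N] {d m : ℕ} (D : Matrix N (Fin m) ℝ)
    (U : Matrix N (Fin d) ℝ) (S : Matrix (Fin d) (Fin d) ℝ)
    (V : Matrix (Fin m) (Fin d) ℝ) : Prop :=
  Vᵀ * V = 1 ∧ (∀ a b, a ≠ b → S a b = 0) ∧ (∀ a, 0 ≤ S a a) ∧
    D * V = U * S ∧ Dᵀ * U = V * S ∧ IsTopSingVecs D U

/-- The generalized power method sequence with spectral initialization, run on the data
matrix D (so with C = DDᵀ): S⁰ = P_n(U) for top singular vectors U of D, and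
S^{t+1} = P_n(C Sᵗ). -/
def IsGPM {n d m : ℕ} (D : Matrix (Fin n × Fin d) (Fin m) ℝ)
    (S : ℕ → Matrix (Fin n × Fin d) (Fin d) ℝ) : Prop :=
  (∃ U, IsTopSingVecs D U ∧ IsPolarBlocks U (S 0)) ∧
    ∀ t, IsPolarBlocks (D * Dᵀ * S t) (S (t + 1))

/-- W^(i): W with its i-th block row replaced by 0. -/
def mask {n d m : ℕ} (W : Matrix (Fin n × Fin d) (Fin m) ℝ) (i : Fin n) :
    Matrix (Fin n × Fin d) (Fin m) ℝ :=
  Matrix.of fun p b => if p.1 = i then 0 else W p b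

/-- The noise matrix Δ = WAᵀZᵀ + ZAWᵀ + σWWᵀ. -/
noncomputable def delta {n d m : ℕ} (A : Matrix (Fin d) (Fin m) ℝ)
    (W : Matrix (Fin n × Fin d) (Fin m) ℝ) (σ : ℝ) :
    Matrix (Fin n × Fin d) (Fin n × Fin d) ℝ :=
  W * Aᵀ * (ZStack n d)ᵀ + ZStack n d * A * Wᵀ + σ • (W * Wᵀ)

/-- The i-th block column Δ_i = WAᵀ + ZAW_iᵀ + σWW_iᵀ of Δ. -/
noncomputable def deltaCol {n d m : ℕ} (A : Matrix (Fin d) (Fin m) ℝ)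
    (W : Matrix (Fin n × Fin d) (Fin m) ℝ) (σ : ℝ) (i : Fin n) :
    Matrix (Fin n × Fin d) (Fin d) ℝ :=
  W * Aᵀ + ZStack n d * A * (blk W i)ᵀ + σ • (W * (blk W i)ᵀ)

/-- The operator L S = C S/(n‖A‖²) with C = ZAAᵀZᵀ + σΔ. -/
noncomputable def Lop {n d m : ℕ} (A : Matrix (Fin d) (Fin m) ℝ)
    (W : Matrix (Fin n × Fin d) (Fin m) ℝ) (σ : ℝ)
    (S : Matrix (Fin n × Fin d) (Fin d) ℝ) : Matrix (Fin n × Fin d) (Fin d) ℝ :=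
  ((n : ℝ) * opNorm A ^ 2)⁻¹ •
    ((ZStack n d * A * Aᵀ * (ZStack n d)ᵀ + σ • delta A W σ) * S)

/-- √(nd) + √m + √(2γ n log n). -/
noncomputable def bnd1 (n d m : ℕ) (γ : ℝ) : ℝ :=
  Real.sqrt ((n : ℝ) * d) + Real.sqrt (m : ℝ) + Real.sqrt (2 * γ * n * Real.log n)

/-- √(nd) + √m + √(2γ log n). -/
noncomputable def bnd2 (n d m : ℕ) (γ : ℝ) : ℝ :=
  Real.sqrt ((n : ℝ) * d) + Real.sqrt (m : ℝ) + Real.sqrt (2 * γ * Real.log n)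

/-- The basin of attraction N_ε. -/
def memNeps {n d : ℕ} (ε : ℝ) (S : Matrix (Fin n × Fin d) (Fin d) ℝ) : Prop :=
  OrthBlocks S ∧ dF S (ZStack n d) ≤ ε * Real.sqrt ((n : ℝ) * d)

/-- The basin of attraction N_{ξ,∞}. -/
def memNxi {n d m : ℕ} (W : Matrix (Fin n × Fin d) (Fin m) ℝ) (γ ξ : ℝ)
    (S : Matrix (Fin n × Fin d) (Fin d) ℝ) : Prop :=
  OrthBlocks S ∧ ∀ i, frob (blk W i * Wᵀ * S) ≤ ξ * Real.sqrt (d : ℝ) * bnd1 n d m γ ^ 2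

/-- The distribution of a matrix with i.i.d. standard Gaussian N(0,1) entries. -/
noncomputable def stdGaussian (ι κ : Type*) [Fintype ι] [Fintype κ] :
    Measure (ι → κ → ℝ) :=
  Measure.pi fun _ : ι => Measure.pi fun _ : κ => ProbabilityTheory.gaussianReal 0 1

/- ===== auxiliary lemmas ===== -/

section Aux

variable {α β : Type*} [Fintype α] [Fintype β]

lemma vnorm_nonneg (v : β → ℝ) : 0 ≤ vnorm v := Real.sqrt_nonneg _

lemma sum_sq_nonneg (v : β → ℝ) : (0:ℝ) ≤ ∑ j, v j ^ 2 :=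
  Finset.sum_nonneg fun _ _ => sq_nonneg _

lemma vnorm_sq (v : β → ℝ) : vnorm v ^ 2 = ∑ j, v j ^ 2 :=
  Real.sq_sqrt (sum_sq_nonneg v)

lemma dot_le_vnorm_mul_vnorm (u v : β → ℝ) : u ⬝ᵥ v ≤ vnorm u * vnorm v := by
  simpa [dotProduct, vnorm, sq] using
    Real.sum_mul_le_sqrt_mul_sqrt Finset.univ u v

lemma vnorm_eq_sqrt_dot (v : β → ℝ) : vnorm v = Real.sqrt (v ⬝ᵥ v) := by
  simp [vnorm, dotProduct, sq]

lemma vnorm_smul (c : ℝ) (v : β → ℝ) : vnorm (c • v) = |c| * vnorm v := by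
  simp only [vnorm, Pi.smul_apply, smul_eq_mul, mul_pow, ← Finset.mul_sum]
  rw [Real.sqrt_mul (sq_nonneg c), Real.sqrt_sq_eq_abs]

lemma vnorm_eq_zero_iff {v : β → ℝ} : vnorm v = 0 ↔ v = 0 := by
  constructor
  · intro h
    have h2 : ∑ j, v j ^ 2 = 0 := by
      have := vnorm_sq v; rw [h] at this; simpa using this.symm
    funext j
    have := (Finset.sum_eq_zero_iff_of_nonneg (fun i _ => sq_nonneg (v i))).1 h2 j
      (Finset.mem_univ j)
    exact pow_eq_zero_iff (n := 2) (by norm_num) |>.1 this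
  · intro h; simp [h, vnorm]

lemma frob_nonneg (X : Matrix α β ℝ) : 0 ≤ frob X := Real.sqrt_nonneg _

lemma frob_eq_vnorm (X : Matrix α β ℝ) : frob X = vnorm (fun p : α × β => X p.1 p.2) := by
  rw [frob, vnorm, Fintype.sum_prod_type]

lemma vnorm_eq_norm (v : β → ℝ) : vnorm v = ‖(WithLp.equiv 2 (β → ℝ)).symm v‖ := by
  rw [EuclideanSpace.norm_eq]
  simp [vnorm, Real.norm_eq_abs, sq_abs]

lemma vnorm_add_le (u v : β → ℝ) : vnorm (u + v) ≤ vnorm u + vnorm v := by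
  simp only [vnorm_eq_norm]
  exact norm_add_le _ _

lemma vnorm_neg (v : β → ℝ) : vnorm (-v) = vnorm v := by
  simp only [vnorm_eq_norm]; exact norm_neg _

lemma frob_add_le (X Y : Matrix α β ℝ) : frob (X + Y) ≤ frob X + frob Y := by
  simp only [frob_eq_vnorm]
  exact vnorm_add_le _ _

lemma frob_neg (X : Matrix α β ℝ) : frob (-X) = frob X := by
  simp only [frob_eq_vnorm]
  exact vnorm_neg _

lemma frob_zero : frob (0 : Matrix α β ℝ) = 0 := by simp [frob]

lemma vnorm_mulVec_le_frob (X : Matrix α β ℝ) (u : β → ℝ) :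
    vnorm (X *ᵥ u) ≤ frob X * vnorm u := by
  have hsq : ∑ i, (X *ᵥ u) i ^ 2 ≤ (∑ i, ∑ j, X i j ^ 2) * ∑ j, u j ^ 2 := by
    rw [Finset.sum_mul]
    refine Finset.sum_le_sum fun i _ => ?_
    simpa [Matrix.mulVec, dotProduct] using
      Finset.sum_mul_sq_le_sq_mul_sq Finset.univ (fun j => X i j) u
  calc vnorm (X *ᵥ u) = Real.sqrt (∑ i, (X *ᵥ u) i ^ 2) := rfl
    _ ≤ Real.sqrt ((∑ i, ∑ j, X i j ^ 2) * ∑ j, u j ^ 2) := Real.sqrt_le_sqrt hsq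
    _ = frob X * vnorm u := by
        rw [Real.sqrt_mul (by positivity)]; rfl

lemma opSet_bddAbove (X : Matrix α β ℝ) :
    BddAbove {r : ℝ | ∃ u : β → ℝ, vnorm u = 1 ∧ r = vnorm (X.mulVec u)} := by
  refine ⟨frob X, fun r hr => ?_⟩
  obtain ⟨u, hu, rfl⟩ := hr
  simpa [hu] using vnorm_mulVec_le_frob X u

lemma exists_unit_vec [Nonempty β] : ∃ u : β → ℝ, vnorm u = 1 := by
  classical
  obtain ⟨j₀⟩ := ‹Nonempty β›
  refine ⟨Pi.single j₀ 1, ?_⟩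
  have : ∑ j, (Pi.single j₀ 1 : β → ℝ) j ^ 2 = 1 := by
    rw [Finset.sum_eq_single j₀] <;> simp +contextual [Pi.single_apply]
  simp [vnorm, this]

lemma opNorm_nonneg [Nonempty β] (X : Matrix α β ℝ) : 0 ≤ opNorm X := by
  obtain ⟨u, hu⟩ := exists_unit_vec (β := β)
  have hm : vnorm (X *ᵥ u) ∈ {r : ℝ | ∃ u : β → ℝ, vnorm u = 1 ∧ r = vnorm (X.mulVec u)} :=
    ⟨u, hu, rfl⟩
  exact le_trans (vnorm_nonneg _) (le_csSup (opSet_bddAbove X) hm)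

lemma vnorm_mulVec_le (X : Matrix α β ℝ) (u : β → ℝ) :
    vnorm (X *ᵥ u) ≤ opNorm X * vnorm u := by
  rcases eq_or_ne (vnorm u) 0 with h | h
  · have h0 : u = 0 := vnorm_eq_zero_iff.1 h
    have : vnorm (X *ᵥ u) = 0 := by
      rw [h0, Matrix.mulVec_zero]; exact vnorm_eq_zero_iff.2 rfl
    rw [this, h, mul_zero]
  · have hc : 0 < vnorm u := lt_of_le_of_ne (vnorm_nonneg u) (Ne.symm h)
    set c := vnorm u with hcdef
    have hu' : vnorm (c⁻¹ • u) = 1 := by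
      rw [vnorm_smul, abs_of_pos (inv_pos.2 hc)]
      field_simp
      exact hcdef.symm
    have hmem : vnorm (X *ᵥ (c⁻¹ • u)) ∈
        {r : ℝ | ∃ u : β → ℝ, vnorm u = 1 ∧ r = vnorm (X.mulVec u)} := ⟨_, hu', rfl⟩
    have hle : vnorm (X *ᵥ (c⁻¹ • u)) ≤ opNorm X := le_csSup (opSet_bddAbove X) hmem
    rw [Matrix.mulVec_smul, vnorm_smul, abs_of_pos (inv_pos.2 hc)] at hle
    calc vnorm (X *ᵥ u) = c * (c⁻¹ * vnorm (X *ᵥ u)) := by field_simp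
      _ ≤ c * opNorm X := mul_le_mul_of_nonneg_left hle (le_of_lt hc)
      _ = opNorm X * c := mul_comm _ _

lemma vnorm_mulVec_transpose_le [Nonempty β] (X : Matrix α β ℝ) (u : α → ℝ) :
    vnorm (Xᵀ *ᵥ u) ≤ opNorm X * vnorm u := by
  set w := Xᵀ *ᵥ u with hw
  have hdot : u ⬝ᵥ (X *ᵥ w) = w ⬝ᵥ w := by
    rw [Matrix.dotProduct_mulVec, hw, ← Matrix.mulVec_transpose]
  have h1 : vnorm w ^ 2 ≤ vnorm u * (opNorm X * vnorm w) := by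
    rw [vnorm_sq]
    calc ∑ j, w j ^ 2 = w ⬝ᵥ w := by simp [dotProduct, sq]
      _ = u ⬝ᵥ (X *ᵥ w) := hdot.symm
      _ ≤ vnorm u * vnorm (X *ᵥ w) := dot_le_vnorm_mul_vnorm _ _
      _ ≤ vnorm u * (opNorm X * vnorm w) :=
          mul_le_mul_of_nonneg_left (vnorm_mulVec_le X w) (vnorm_nonneg u)
  rcases eq_or_lt_of_le (vnorm_nonneg w) with h | h
  · rw [← h]; exact mul_nonneg (opNorm_nonneg X) (vnorm_nonneg u)
  · nlinarith [vnorm_nonneg u, opNorm_nonneg X]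

lemma vnorm_vecMul_le [Nonempty β] (X : Matrix α β ℝ) (u : α → ℝ) :
    vnorm (u ᵥ* X) ≤ opNorm X * vnorm u := by
  rw [← Matrix.mulVec_transpose]
  exact vnorm_mulVec_transpose_le X u

lemma isOrth_one {d : ℕ} : IsOrth (1 : Matrix (Fin d) (Fin d) ℝ) := by
  constructor <;> simp

lemma isOrth_mul {d : ℕ} {P Q : Matrix (Fin d) (Fin d) ℝ} (hP : IsOrth P) (hQ : IsOrth Q) :
    IsOrth (P * Q) := by
  constructor
  · rw [Matrix.transpose_mul, Matrix.mul_assoc, ← Matrix.mul_assoc Pᵀ, hP.1,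
      Matrix.one_mul, hQ.1]
  · rw [Matrix.transpose_mul, Matrix.mul_assoc, ← Matrix.mul_assoc Q, hQ.2,
      Matrix.one_mul, hP.2]

lemma isOrth_transpose {d : ℕ} {Q : Matrix (Fin d) (Fin d) ℝ} (hQ : IsOrth Q) : IsOrth Qᵀ := by
  refine ⟨?_, ?_⟩
  · rw [Matrix.transpose_transpose]; exact hQ.2
  · rw [Matrix.transpose_transpose]; exact hQ.1

lemma vnorm_vecMul_orth {d : ℕ} {Q : Matrix (Fin d) (Fin d) ℝ} (hQ : IsOrth Q) (v : Fin d → ℝ) :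
    vnorm (v ᵥ* Q) = vnorm v := by
  rw [vnorm_eq_sqrt_dot, vnorm_eq_sqrt_dot v]
  congr 1
  calc (v ᵥ* Q) ⬝ᵥ (v ᵥ* Q) = v ⬝ᵥ (Q *ᵥ (v ᵥ* Q)) := (Matrix.dotProduct_mulVec _ _ _).symm
    _ = v ⬝ᵥ (Q *ᵥ (Qᵀ *ᵥ v)) := by rw [Matrix.mulVec_transpose]
    _ = v ⬝ᵥ ((Q * Qᵀ) *ᵥ v) := by rw [Matrix.mulVec_mulVec]
    _ = v ⬝ᵥ v := by rw [hQ.2, Matrix.one_mulVec]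

lemma sum_sq_vecMul_orth {d : ℕ} {Q : Matrix (Fin d) (Fin d) ℝ} (hQ : IsOrth Q) (v : Fin d → ℝ) :
    ∑ j, (v ᵥ* Q) j ^ 2 = ∑ j, v j ^ 2 := by
  rw [← vnorm_sq, ← vnorm_sq, vnorm_vecMul_orth hQ]

lemma frob_mul_orth {d : ℕ} (M : Matrix α (Fin d) ℝ) {Q : Matrix (Fin d) (Fin d) ℝ}
    (hQ : IsOrth Q) : frob (M * Q) = frob M := by
  unfold frob
  congr 1
  refine Finset.sum_congr rfl fun i _ => ?_
  have : ∀ j, (M * Q) i j = ((fun c => M i c) ᵥ* Q) j := by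
    intro j; simp [Matrix.mul_apply, Matrix.vecMul, dotProduct]
  simp_rw [this]
  exact sum_sq_vecMul_orth hQ _

lemma frob_mul_le_of_mulVec_le {γ : Type*} [Fintype γ] {β' : Type*} [Fintype β']
    {X' : Matrix α β' ℝ} {c : ℝ}
    (hc : 0 ≤ c) (h : ∀ u : β' → ℝ, vnorm (X' *ᵥ u) ≤ c * vnorm u)
    (M : Matrix β' γ ℝ) : frob (X' * M) ≤ c * frob M := by
  have key : ∑ i, ∑ j, (X' * M) i j ^ 2 ≤ c ^ 2 * ∑ i, ∑ j, M i j ^ 2 := by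
    rw [Finset.sum_comm (γ := α), Finset.sum_comm (γ := β'), Finset.mul_sum]
    refine Finset.sum_le_sum fun j _ => ?_
    have hcol : ∀ i, (X' * M) i j = (X' *ᵥ fun k => M k j) i := by
      intro i; simp [Matrix.mul_apply, Matrix.mulVec, dotProduct]
    simp_rw [hcol]
    have h1 := h (fun k => M k j)
    have h2 : vnorm (X' *ᵥ fun k => M k j) ^ 2 ≤ (c * vnorm fun k => M k j) ^ 2 :=
      pow_le_pow_left₀ (vnorm_nonneg _) h1 2
    rw [vnorm_sq] at h2
    calc ∑ i, (X' *ᵥ fun k => M k j) i ^ 2 ≤ (c * vnorm fun k => M k j) ^ 2 := h2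
      _ = c ^ 2 * ∑ k, M k j ^ 2 := by rw [mul_pow, vnorm_sq]
  calc frob (X' * M) = Real.sqrt (∑ i, ∑ j, (X' * M) i j ^ 2) := rfl
    _ ≤ Real.sqrt (c ^ 2 * ∑ i, ∑ j, M i j ^ 2) := Real.sqrt_le_sqrt key
    _ = c * frob M := by
        rw [Real.sqrt_mul (sq_nonneg c), Real.sqrt_sq hc]; rfl

section dFAux
variable {n d : ℕ} (X Y Z' : Matrix (Fin n × Fin d) (Fin d) ℝ)

lemma dFSet_nonempty : {r : ℝ | ∃ Q, IsOrth Q ∧ r = frob (X - Y * Q)}.Nonempty :=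
  ⟨frob (X - Y * 1), 1, isOrth_one, rfl⟩

lemma dFSet_bddBelow : BddBelow {r : ℝ | ∃ Q, IsOrth Q ∧ r = frob (X - Y * Q)} := by
  refine ⟨0, fun r hr => ?_⟩
  obtain ⟨Q, hQ, rfl⟩ := hr
  exact frob_nonneg _

lemma dF_nonneg : 0 ≤ dF X Y :=
  le_csInf (dFSet_nonempty X Y) (fun r hr => by obtain ⟨Q, hQ, rfl⟩ := hr; exact frob_nonneg _)

lemma dF_le {Q : Matrix (Fin d) (Fin d) ℝ} (hQ : IsOrth Q) : dF X Y ≤ frob (X - Y * Q) :=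
  csInf_le (dFSet_bddBelow X Y) ⟨Q, hQ, rfl⟩

lemma dF_self_le_zero : dF X X ≤ 0 := by
  have := dF_le X X isOrth_one
  simpa [frob_zero] using this

lemma exists_orth_frob_lt {η : ℝ} (hη : 0 < η) :
    ∃ Q, IsOrth Q ∧ frob (X - Y * Q) < dF X Y + η := by
  have h : dF X Y < dF X Y + η := by linarith
  obtain ⟨r, hr, hlt⟩ := exists_lt_of_csInf_lt (dFSet_nonempty X Y) h
  obtain ⟨Q, hQ, rfl⟩ := hr
  exact ⟨Q, hQ, hlt⟩

lemma frob_sub_mul_orth {Q : Matrix (Fin d) (Fin d) ℝ} (hQ : IsOrth Q) :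
    frob (Y - X * Q) = frob (X - Y * Qᵀ) := by
  have h : (Y - X * Q) * Qᵀ = Y * Qᵀ - X := by
    rw [Matrix.sub_mul, Matrix.mul_assoc, hQ.2, Matrix.mul_one]
  calc frob (Y - X * Q) = frob ((Y - X * Q) * Qᵀ) := (frob_mul_orth _ (isOrth_transpose hQ)).symm
    _ = frob (Y * Qᵀ - X) := by rw [h]
    _ = frob (X - Y * Qᵀ) := by rw [← frob_neg (Y * Qᵀ - X), neg_sub]

lemma dF_le_dF_symm : dF X Y ≤ dF Y X := by
  refine le_csInf (dFSet_nonempty Y X) fun r hr => ?_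
  obtain ⟨Q, hQ, rfl⟩ := hr
  exact le_trans (dF_le X Y (isOrth_transpose hQ)) (le_of_eq (frob_sub_mul_orth X Y hQ).symm)

lemma dF_comm : dF X Y = dF Y X :=
  le_antisymm (dF_le_dF_symm X Y) (dF_le_dF_symm Y X)

lemma dF_triangle : dF X Z' ≤ dF X Y + dF Y Z' := by
  refine le_of_forall_pos_le_add fun η hη => ?_
  obtain ⟨Q1, hQ1, h1⟩ := exists_orth_frob_lt X Y (half_pos hη)
  obtain ⟨Q2, hQ2, h2⟩ := exists_orth_frob_lt Y Z' (half_pos hη)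
  have key : dF X Z' ≤ frob (X - Z' * (Q2 * Q1)) := dF_le X Z' (isOrth_mul hQ2 hQ1)
  have hsplit : X - Z' * (Q2 * Q1) = (X - Y * Q1) + (Y - Z' * Q2) * Q1 := by
    rw [Matrix.sub_mul, ← Matrix.mul_assoc]
    abel
  calc dF X Z' ≤ frob ((X - Y * Q1) + (Y - Z' * Q2) * Q1) := by rw [← hsplit]; exact key
    _ ≤ frob (X - Y * Q1) + frob ((Y - Z' * Q2) * Q1) := frob_add_le _ _
    _ = frob (X - Y * Q1) + frob (Y - Z' * Q2) := by rw [frob_mul_orth _ hQ1]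
    _ ≤ (dF X Y + η / 2) + (dF Y Z' + η / 2) := by exact add_le_add h1.le h2.le
    _ = dF X Y + dF Y Z' + η := by ring

lemma le_add_mul_dF {a b c : ℝ}
    (hc : 0 ≤ c) (h : ∀ Q, IsOrth Q → a ≤ b + c * frob (X - Y * Q)) :
    a ≤ b + c * dF X Y := by
  refine le_of_forall_pos_le_add fun η hη => ?_
  have hη' : 0 < η / (c + 1) := by positivity
  obtain ⟨Q, hQ, hlt⟩ := exists_orth_frob_lt X Y hη'
  have h' := h Q hQ
  have hcf : c * frob (X - Y * Q) ≤ c * (dF X Y + η / (c + 1)) :=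
    mul_le_mul_of_nonneg_left (le_of_lt hlt) hc
  have hfrac : c * (η / (c + 1)) ≤ η := by
    rw [div_eq_mul_inv]
    have h1 : c / (c + 1) ≤ 1 := by
      rw [div_le_one (by linarith)]; linarith
    calc c * (η * (c + 1)⁻¹) = (c / (c + 1)) * η := by ring
      _ ≤ 1 * η := mul_le_mul_of_nonneg_right h1 (le_of_lt hη)
      _ = η := one_mul η
  nlinarith

end dFAux

lemma sum_sq_orth {d : ℕ} {Q : Matrix (Fin d) (Fin d) ℝ} (hQ : IsOrth Q) :
    ∑ a, ∑ b, Q a b ^ 2 = d := by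
  rw [Finset.sum_comm]
  have h : ∀ b, ∑ a, Q a b ^ 2 = (Qᵀ * Q) b b := by
    intro b; simp [Matrix.mul_apply, Matrix.transpose_apply, sq]
  simp_rw [h, hQ.1]
  simp [Matrix.one_apply]

lemma frob_sub_orth_sq {d : ℕ} (X : Matrix (Fin d) (Fin d) ℝ) {Q : Matrix (Fin d) (Fin d) ℝ}
    (hQ : IsOrth Q) :
    frob (X - Q) ^ 2 =
      (∑ a, ∑ b, X a b ^ 2) - 2 * (∑ a, ∑ b, X a b * Q a b) + d := by
  have h1 : frob (X - Q) ^ 2 = ∑ a, ∑ b, (X a b - Q a b) ^ 2 := by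
    rw [frob, Real.sq_sqrt]
    · simp [Matrix.sub_apply]
    · positivity
  rw [h1]
  have h2 : ∀ a b, (X a b - Q a b) ^ 2 = X a b ^ 2 - 2 * (X a b * Q a b) + Q a b ^ 2 := by
    intros; ring
  simp_rw [h2, Finset.sum_add_distrib, Finset.sum_sub_distrib, ← Finset.mul_sum,
    sum_sq_orth hQ]

lemma isPolar_smul {d : ℕ} {c : ℝ} (hc : 0 < c) {X R : Matrix (Fin d) (Fin d) ℝ}
    (h : IsPolar X R) : IsPolar (c • X) R := by
  refine ⟨h.1, fun Q hQ => ?_⟩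
  have base := h.2 Q hQ
  have hsq : frob (X - R) ^ 2 ≤ frob (X - Q) ^ 2 :=
    pow_le_pow_left₀ (frob_nonneg _) base 2
  rw [frob_sub_orth_sq X h.1, frob_sub_orth_sq X hQ] at hsq
  have hg : (∑ a, ∑ b, X a b * Q a b) ≤ ∑ a, ∑ b, X a b * R a b := by linarith
  have goalSq : frob (c • X - R) ^ 2 ≤ frob (c • X - Q) ^ 2 := by
    rw [frob_sub_orth_sq (c • X) h.1, frob_sub_orth_sq (c • X) hQ]
    have e1 : ∀ (P : Matrix (Fin d) (Fin d) ℝ),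
        (∑ a, ∑ b, (c • X) a b * P a b) = c * ∑ a, ∑ b, X a b * P a b := by
      intro P
      simp_rw [Matrix.smul_apply, smul_eq_mul, Finset.mul_sum, mul_assoc]
    rw [e1 Q, e1 R]
    nlinarith
  have h2 : frob (c • X - R) ≤ frob (c • X - Q) := by
    have := frob_nonneg (c • X - R)
    have := frob_nonneg (c • X - Q)
    nlinarith
  exact h2

lemma blk_smul {n d k : ℕ} (c : ℝ) (X : Matrix (Fin n × Fin d) (Fin k) ℝ) (i : Fin n) :
    blk (c • X) i = c • blk X i := rfl

lemma isPolarBlocks_smul {n d : ℕ} {c : ℝ} (hc : 0 < c)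
    {X S : Matrix (Fin n × Fin d) (Fin d) ℝ} (h : IsPolarBlocks X S) :
    IsPolarBlocks (c • X) S := by
  intro i
  rw [blk_smul]
  exact isPolar_smul hc (h i)

lemma dF_le_zero_of_one {n d : ℕ} (hn : n = 1) (X Y : Matrix (Fin n × Fin d) (Fin d) ℝ)
    (hX : OrthBlocks X) (hY : OrthBlocks Y) : dF X Y ≤ 0 := by
  subst hn
  set Q := (blk Y 0)ᵀ * blk X 0 with hQdef
  have hQ : IsOrth Q := isOrth_mul (isOrth_transpose (hY 0)) (hX 0)
  have hzero : X - Y * Q = 0 := by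
    ext ⟨i, a⟩ b
    have hi : i = 0 := Subsingleton.elim i 0
    subst hi
    have h : (Y * Q) (0, a) b = X (0, a) b := by
      have expand : (Y * Q) (0, a) b = ∑ c, Y (0, a) c * ∑ e, Y (0, e) c * X (0, e) b := by
        simp [Matrix.mul_apply, hQdef, Matrix.transpose_apply, blk]
      rw [expand]
      have swap : ∑ c, Y (0, a) c * ∑ e, Y (0, e) c * X (0, e) b
          = ∑ e, (∑ c, Y (0, a) c * Y (0, e) c) * X (0, e) b := by
        simp_rw [Finset.mul_sum, Finset.sum_mul]
        rw [Finset.sum_comm]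
        exact Finset.sum_congr rfl fun e _ => Finset.sum_congr rfl fun c _ => by ring
      have inner : ∀ e, (∑ c, Y (0, a) c * Y (0, e) c) = (blk Y 0 * (blk Y 0)ᵀ) a e := by
        intro e; simp [Matrix.mul_apply, blk, Matrix.transpose_apply]
      have hYY : blk Y 0 * (blk Y 0)ᵀ = 1 := (hY 0).2
      rw [swap]
      simp_rw [inner, hYY, Matrix.one_apply]
      simp
    simp [Matrix.sub_apply, h]
  have := dF_le X Y hQ
  rw [hzero, frob_zero] at this
  exact this

lemma lop_eq {n d m : ℕ} (A : Matrix (Fin d) (Fin m) ℝ)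
    (W : Matrix (Fin n × Fin d) (Fin m) ℝ) (σ : ℝ)
    (X : Matrix (Fin n × Fin d) (Fin d) ℝ) :
    Lop A W σ X = ((n : ℝ) * opNorm A ^ 2)⁻¹ •
      ((ZStack n d * A + σ • W) * (ZStack n d * A + σ • W)ᵀ * X) := by
  unfold Lop delta
  congr 2
  simp only [Matrix.transpose_add, Matrix.transpose_smul, Matrix.transpose_mul,
    Matrix.add_mul, Matrix.mul_add, Matrix.smul_mul, Matrix.mul_smul, smul_add,
    smul_smul, Matrix.mul_assoc]
  abel

lemma sigmaMin_le_opNorm {d m : ℕ} (hd : 1 ≤ d) (hm : 1 ≤ m)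
    (A : Matrix (Fin d) (Fin m) ℝ) : sigmaMin A ≤ opNorm A := by
  have hd' : Nonempty (Fin d) := ⟨⟨0, hd⟩⟩
  have hm' : Nonempty (Fin m) := ⟨⟨0, hm⟩⟩
  obtain ⟨u, hu⟩ := exists_unit_vec (β := Fin d)
  have hmem : vnorm (u ᵥ* A) ∈
      {r : ℝ | ∃ u : Fin d → ℝ, vnorm u = 1 ∧ r = vnorm (Matrix.vecMul u A)} := ⟨u, hu, rfl⟩
  have hbdd : BddBelow {r : ℝ | ∃ u : Fin d → ℝ, vnorm u = 1 ∧ r = vnorm (Matrix.vecMul u A)} :=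
    ⟨0, fun r hr => by obtain ⟨v, hv, rfl⟩ := hr; exact vnorm_nonneg _⟩
  calc sigmaMin A ≤ vnorm (u ᵥ* A) := csInf_le hbdd hmem
    _ ≤ opNorm A * vnorm u := vnorm_vecMul_le A u
    _ = opNorm A := by rw [hu, mul_one]

lemma sqrt_le_two_pow (n : ℕ) : Real.sqrt n ≤ 2 ^ n := by
  have h1 : (n : ℝ) ≤ (2 ^ n) ^ 2 := by
    have h : n ≤ 4 ^ n := le_of_lt (lt_of_lt_of_le (Nat.lt_two_pow_self (n := n))
      (Nat.pow_le_pow_left (by norm_num) n))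
    calc (n : ℝ) ≤ (4 : ℝ) ^ n := by exact_mod_cast h
      _ = (2 ^ n) ^ 2 := by rw [← pow_mul, mul_comm, pow_mul]; norm_num
  calc Real.sqrt n ≤ Real.sqrt ((2 ^ n) ^ 2) := Real.sqrt_le_sqrt h1
    _ = 2 ^ n := Real.sqrt_sq (by positivity)

end Aux


set_option maxHeartbeats 1600000 in
/-- Lemma 5.8: conditioned on the basin events for 0 ≤ t ≤ n, the contraction
property on N_ε ∩ N_{ξ,∞}, and the Gaussian norm events, all GPM iterates stay in
N_ε ∩ N_{ξ,∞} and d_F(Sᵗ,S^{t−1}) ≤ (1/2)d_F(S^{t−1},S^{t−2}) ≤ 2^{−t+1}d_F(S¹,S⁰). -/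
theorem gpm_global_contraction (n d m : ℕ) (hn : 1 ≤ n) (hd : 1 ≤ d) (hm : d ≤ m)
    (A : Matrix (Fin d) (Fin m) ℝ) (hA : 0 < sigmaMin A)
    (W : Matrix (Fin n × Fin d) (Fin m) ℝ) (σ γ : ℝ) (hσ : 0 < σ) (hγ : 2 ≤ γ)
    (ε ξ : ℝ) (hε : ε = 1 / (32 * kappa A ^ 2 * Real.sqrt (d : ℝ))) (hξ : ξ = 6)
    (S : ℕ → Matrix (Fin n × Fin d) (Fin d) ℝ)
    (hS : IsGPM (ZStack n d * A + σ • W) S)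
    (Sl : Fin n → ℕ → Matrix (Fin n × Fin d) (Fin d) ℝ)
    (hSl : ∀ i, IsGPM (ZStack n d * A + σ • mask W i) (Sl i))
    (h1 : ∀ t ≤ n, ∀ i, frob (blk W i * Wᵀ * S t) ≤
      ξ / 2 * Real.sqrt (d : ℝ) * bnd1 n d m γ ^ 2)
    (h2 : ∀ t ≤ n, ∀ i, dF (S t) (Sl i t) ≤ ε * Real.sqrt (d : ℝ))
    (h3 : ∀ t ≤ n, dF (S t) (ZStack n d) ≤ ε * Real.sqrt ((n : ℝ) * d) / 2)
    (hcontr : ∀ X Y : Matrix (Fin n × Fin d) (Fin d) ℝ,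
      memNeps ε X → memNxi W γ ξ X → memNeps ε Y → memNxi W γ ξ Y →
      ∀ TX TY, IsPolarBlocks (Lop A W σ X) TX → IsPolarBlocks (Lop A W σ Y) TY →
        dF TX TY ≤ 1 / 2 * dF X Y)
    (hW : opNorm W ≤ bnd2 n d m γ)
    (hWi : ∀ i, opNorm (blk W i) ≤
      Real.sqrt (d : ℝ) + Real.sqrt (m : ℝ) + Real.sqrt (2 * γ * Real.log n)) :
    (∀ t, memNeps ε (S t) ∧ memNxi W γ ξ (S t)) ∧
    ∀ t, 2 ≤ t →
      dF (S t) (S (t - 1)) ≤ 1 / 2 * dF (S (t - 1)) (S (t - 2)) ∧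
      dF (S t) (S (t - 1)) ≤ (1 / 2 : ℝ) ^ (t - 1) * dF (S 1) (S 0) := by
  classical
  haveI hdne : Nonempty (Fin d) := ⟨⟨0, hd⟩⟩
  haveI hmne : Nonempty (Fin m) := ⟨⟨0, le_trans hd hm⟩⟩
  -- basic positivity facts
  have hnR : (0:ℝ) < n := by exact_mod_cast hn
  have hn1R : (1:ℝ) ≤ n := by exact_mod_cast hn
  have hd1R : (1:ℝ) ≤ d := by exact_mod_cast hd
  have hσmin_le : sigmaMin A ≤ opNorm A := sigmaMin_le_opNorm hd (le_trans hd hm) A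
  have hopA : 0 < opNorm A := lt_of_lt_of_le hA hσmin_le
  have hκ1 : (1:ℝ) ≤ kappa A := by
    rw [kappa, le_div_iff₀ hA]; linarith
  have hκpos : (0:ℝ) < kappa A := lt_of_lt_of_le zero_lt_one hκ1
  have hκ2 : (1:ℝ) ≤ kappa A ^ 2 := by nlinarith
  have hsd1 : (1:ℝ) ≤ Real.sqrt d := by
    rw [show (1:ℝ) = Real.sqrt 1 by simp]
    exact Real.sqrt_le_sqrt hd1R
  have hsd0 : (0:ℝ) < Real.sqrt d := lt_of_lt_of_le zero_lt_one hsd1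
  have hεpos : 0 < ε := by
    rw [hε]
    exact div_pos one_pos (mul_pos (mul_pos (by norm_num) (pow_pos hκpos 2)) hsd0)
  have hεnd : ε * Real.sqrt ((n:ℝ) * d) = Real.sqrt n / (32 * kappa A ^ 2) := by
    rw [hε, Real.sqrt_mul (le_of_lt hnR)]
    field_simp
  have hεnd32 : ε * Real.sqrt ((n:ℝ) * d) ≤ Real.sqrt n / 32 := by
    rw [hεnd, div_le_div_iff₀ (mul_pos (by norm_num) (pow_pos hκpos 2)) (by norm_num)]
    nlinarith [Real.sqrt_nonneg (n:ℝ)]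
  have hεndnn : 0 ≤ ε * Real.sqrt ((n:ℝ) * d) :=
    mul_nonneg (le_of_lt hεpos) (Real.sqrt_nonneg _)
  -- orthogonality of all iterates
  have horth : ∀ t, OrthBlocks (S t) := by
    intro t
    cases t with
    | zero =>
      obtain ⟨U, _, hP⟩ := hS.1
      exact fun i => (hP i).1
    | succ t => exact fun i => ((hS.2 t) i).1
  have horthZ : OrthBlocks (ZStack n d) := by
    intro i
    have : blk (ZStack n d) i = 1 := by
      ext a b; simp [blk, ZStack, Matrix.one_apply]
    rw [this]; exact isOrth_one
  -- polar-factor characterization of the GPM step in terms of Lop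
  have hLopP : ∀ t, IsPolarBlocks (Lop A W σ (S t)) (S (t + 1)) := by
    intro t
    rw [lop_eq]
    exact isPolarBlocks_smul
      (inv_pos.2 (mul_pos hnR (pow_pos hopA 2))) (hS.2 t)
  -- one-step contraction
  have hc : ∀ s, memNeps ε (S s) → memNxi W γ ξ (S s) →
      memNeps ε (S (s+1)) → memNxi W γ ξ (S (s+1)) →
      dF (S (s+2)) (S (s+1)) ≤ 1 / 2 * dF (S (s+1)) (S s) := by
    intro s m1 m2 m3 m4
    exact hcontr (S (s+1)) (S s) m3 m4 m1 m2 (S (s+2)) (S (s+1)) (hLopP (s+1)) (hLopP s)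
  -- membership for t ≤ n
  have memLow : ∀ t, t ≤ n → memNeps ε (S t) ∧ memNxi W γ ξ (S t) := by
    intro t ht
    refine ⟨⟨horth t, ?_⟩, ⟨horth t, fun i => ?_⟩⟩
    · have := h3 t ht; linarith
    · have hh := h1 t ht i
      have hsb : (0:ℝ) ≤ Real.sqrt d * bnd1 n d m γ ^ 2 :=
        mul_nonneg (Real.sqrt_nonneg _) (sq_nonneg _)
      rw [hξ] at hh ⊢
      linarith
  -- δ₀ facts
  have hδ0nn : 0 ≤ dF (S 1) (S 0) := dF_nonneg _ _
  have hδ0le : dF (S 1) (S 0) ≤ ε * Real.sqrt ((n:ℝ) * d) := by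
    have t1 := h3 1 hn
    have t0 := h3 0 (Nat.zero_le n)
    have tri := dF_triangle (S 1) (ZStack n d) (S 0)
    rw [dF_comm (ZStack n d) (S 0)] at tri
    linarith
  -- bnd facts
  have hlognn : 0 ≤ Real.log n := Real.log_nonneg hn1R
  have hbnn : 0 ≤ bnd1 n d m γ := by
    unfold bnd1; positivity
  have hlogs : Real.sqrt (2 * γ * Real.log n) ≤ Real.sqrt (2 * γ * n * Real.log n) := by
    apply Real.sqrt_le_sqrt
    have hx : (0:ℝ) ≤ 2 * γ * Real.log n * ((n:ℝ) - 1) :=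
      mul_nonneg (mul_nonneg (mul_nonneg (by norm_num) (by linarith)) hlognn)
        (by linarith)
    nlinarith [hx]
  have hb2le : bnd2 n d m γ ≤ bnd1 n d m γ := by
    unfold bnd1 bnd2
    linarith
  have hnd1R : (1:ℝ) ≤ Real.sqrt ((n:ℝ) * d) := by
    rw [show (1:ℝ) = Real.sqrt 1 by simp]
    exact Real.sqrt_le_sqrt (by nlinarith)
  have hb1 : ∀ i, opNorm (blk W i) ≤ Real.sqrt d * bnd1 n d m γ := by
    intro i
    have hWi' := hWi i
    have t1 : Real.sqrt (d:ℝ) ≤ Real.sqrt d * Real.sqrt ((n:ℝ) * d) := by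
      have := mul_le_mul_of_nonneg_left hnd1R (Real.sqrt_nonneg (d:ℝ))
      linarith [this]
    have t2 : Real.sqrt (m:ℝ) ≤ Real.sqrt d * Real.sqrt (m:ℝ) := by
      have := mul_le_mul_of_nonneg_right hsd1 (Real.sqrt_nonneg (m:ℝ))
      linarith [this]
    have t3 : Real.sqrt (2 * γ * Real.log n) ≤
        Real.sqrt d * Real.sqrt (2 * γ * n * Real.log n) := by
      have h5 := mul_le_mul_of_nonneg_right hsd1
        (Real.sqrt_nonneg (2 * γ * (n:ℝ) * Real.log n))
      linarith [h5, hlogs]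
    have expand : Real.sqrt d * bnd1 n d m γ =
        Real.sqrt d * Real.sqrt ((n:ℝ) * d) + Real.sqrt d * Real.sqrt (m:ℝ)
          + Real.sqrt d * Real.sqrt (2 * γ * n * Real.log n) := by
      unfold bnd1; ring
    linarith
  -- the key induction
  have key : ∀ t, (memNeps ε (S t) ∧ memNxi W γ ξ (S t)) ∧
      dF (S (t+1)) (S t) ≤ (1/2 : ℝ) ^ t * dF (S 1) (S 0) ∧
      (n ≤ t → dF (S t) (S n) ≤ 2 * ((1/2 : ℝ) ^ n - (1/2 : ℝ) ^ t) * dF (S 1) (S 0)) := by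
    intro t
    induction t with
    | zero =>
      refine ⟨memLow 0 (Nat.zero_le n), ?_, fun h => absurd h (by omega)⟩
      rw [pow_zero, one_mul]
    | succ t ih =>
      obtain ⟨⟨ihNe, ihNx⟩, ihDec, ihG⟩ := ih
      have hG1 : n ≤ t + 1 →
          dF (S (t+1)) (S n) ≤ 2 * ((1/2 : ℝ) ^ n - (1/2 : ℝ) ^ (t+1)) * dF (S 1) (S 0) := by
        intro hle
        rcases Nat.lt_or_ge t n with hlt | hge
        · have heq : n = t + 1 := by omega
          rw [← heq]
          have hz := dF_self_le_zero (S n)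
          have hzr : 2 * ((1/2 : ℝ) ^ n - (1/2 : ℝ) ^ n) * dF (S 1) (S 0) = 0 := by ring
          linarith
        · have tri := dF_triangle (S (t+1)) (S t) (S n)
          have hGt := ihG hge
          have hring : (1/2 : ℝ) ^ t * dF (S 1) (S 0)
              + 2 * ((1/2 : ℝ) ^ n - (1/2 : ℝ) ^ t) * dF (S 1) (S 0)
              = 2 * ((1/2 : ℝ) ^ n - (1/2 : ℝ) ^ (t+1)) * dF (S 1) (S 0) := by ring
          linarith
      have hMem1 : memNeps ε (S (t+1)) ∧ memNxi W γ ξ (S (t+1)) := by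
        rcases le_or_gt (t+1) n with hle | hgt
        · exact memLow (t+1) hle
        · have hnt : n ≤ t + 1 := by omega
          have hDn' : dF (S (t+1)) (S n) ≤ 2 * (1/2 : ℝ) ^ n * dF (S 1) (S 0) := by
            have hg := hG1 hnt
            have hpnn : (0:ℝ) ≤ (1/2 : ℝ) ^ (t+1) := by positivity
            linarith [mul_nonneg hpnn hδ0nn]
          constructor
          · refine ⟨horth (t+1), ?_⟩
            rcases Nat.lt_or_ge n 2 with hn2 | hn2
            · have hone : n = 1 := by omega
              have hz := dF_le_zero_of_one hone (S (t+1)) (ZStack n d) (horth (t+1)) horthZ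
              linarith
            · have tri := dF_triangle (S (t+1)) (S n) (ZStack n d)
              have h3n := h3 n le_rfl
              have hpow : (1/2 : ℝ) ^ n ≤ (1/2 : ℝ) ^ 2 :=
                pow_le_pow_of_le_one (by norm_num) (by norm_num) hn2
              have hmm : (1/2 : ℝ) ^ n * dF (S 1) (S 0)
                  ≤ (1/2 : ℝ) ^ 2 * (ε * Real.sqrt ((n:ℝ) * d)) :=
                mul_le_mul hpow hδ0le hδ0nn (by norm_num)
              rw [show ((1/2 : ℝ) ^ 2) = 1/4 by norm_num] at hmm
              linarith
          · refine ⟨horth (t+1), fun i => ?_⟩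
            have hKnn : (0:ℝ) ≤ opNorm (blk W i) * opNorm W :=
              mul_nonneg (opNorm_nonneg _) (opNorm_nonneg _)
            have step1 : ∀ Q, IsOrth Q → frob (blk W i * Wᵀ * S (t+1)) ≤
                frob (blk W i * Wᵀ * S n)
                  + opNorm (blk W i) * opNorm W * frob (S (t+1) - S n * Q) := by
              intro Q hQ
              have hsplit : blk W i * Wᵀ * S (t+1)
                  = blk W i * (Wᵀ * (S (t+1) - S n * Q)) + blk W i * Wᵀ * S n * Q := by
                simp only [Matrix.mul_sub, Matrix.mul_assoc]
                abel
              have hf2 : frob (Wᵀ * (S (t+1) - S n * Q))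
                  ≤ opNorm W * frob (S (t+1) - S n * Q) :=
                frob_mul_le_of_mulVec_le (opNorm_nonneg W)
                  (vnorm_mulVec_transpose_le W) _
              have hf1 : frob (blk W i * (Wᵀ * (S (t+1) - S n * Q)))
                  ≤ opNorm (blk W i) * frob (Wᵀ * (S (t+1) - S n * Q)) :=
                frob_mul_le_of_mulVec_le (opNorm_nonneg (blk W i))
                  (vnorm_mulVec_le (blk W i)) _
              have hf3 := mul_le_mul_of_nonneg_left hf2 (opNorm_nonneg (blk W i))
              calc frob (blk W i * Wᵀ * S (t+1))
                  = frob (blk W i * (Wᵀ * (S (t+1) - S n * Q)) + blk W i * Wᵀ * S n * Q) := by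
                    rw [← hsplit]
                _ ≤ frob (blk W i * (Wᵀ * (S (t+1) - S n * Q)))
                      + frob (blk W i * Wᵀ * S n * Q) := frob_add_le _ _
                _ = frob (blk W i * (Wᵀ * (S (t+1) - S n * Q)))
                      + frob (blk W i * Wᵀ * S n) := by rw [frob_mul_orth _ hQ]
                _ ≤ frob (blk W i * Wᵀ * S n)
                      + opNorm (blk W i) * opNorm W * frob (S (t+1) - S n * Q) := by
                    rw [mul_assoc]
                    linarith
            have step2 : frob (blk W i * Wᵀ * S (t+1)) ≤
                frob (blk W i * Wᵀ * S n)
                  + opNorm (blk W i) * opNorm W * dF (S (t+1)) (S n) :=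
              le_add_mul_dF _ _ hKnn step1
            have hWn := h1 n le_rfl i
            have hδsn : dF (S 1) (S 0) ≤ Real.sqrt n / 32 := le_trans hδ0le hεnd32
            have hdFb : dF (S (t+1)) (S n) ≤ 1/16 := by
              have hsn : Real.sqrt n ≤ 2 ^ n := sqrt_le_two_pow n
              have hp : (1/2 : ℝ) ^ n * 2 ^ n = 1 := by
                rw [← mul_pow]; norm_num
              have hpnn : (0:ℝ) ≤ (1/2 : ℝ) ^ n := by positivity
              have hm1 : 2 * (1/2 : ℝ) ^ n * dF (S 1) (S 0)
                  ≤ 2 * (1/2 : ℝ) ^ n * (Real.sqrt n / 32) := by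
                have := mul_le_mul_of_nonneg_left hδsn
                  (show (0:ℝ) ≤ 2 * (1/2 : ℝ) ^ n by positivity)
                linarith
              have hm2 : (1/2 : ℝ) ^ n * Real.sqrt n ≤ 1 := by
                calc (1/2 : ℝ) ^ n * Real.sqrt n ≤ (1/2 : ℝ) ^ n * 2 ^ n :=
                      mul_le_mul_of_nonneg_left hsn hpnn
                  _ = 1 := hp
              have e : 2 * (1/2 : ℝ) ^ n * (Real.sqrt n / 32)
                  = ((1/2 : ℝ) ^ n * Real.sqrt n) / 16 := by ring
              rw [e] at hm1
              have := hDn'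
              linarith
            have hK : opNorm (blk W i) * opNorm W
                ≤ Real.sqrt d * bnd1 n d m γ * bnd1 n d m γ :=
              mul_le_mul (hb1 i) (le_trans hW hb2le) (opNorm_nonneg W)
                (mul_nonneg (Real.sqrt_nonneg _) hbnn)
            have final : opNorm (blk W i) * opNorm W * dF (S (t+1)) (S n)
                ≤ Real.sqrt d * bnd1 n d m γ ^ 2 / 16 := by
              have h4 := mul_le_mul hK hdFb (dF_nonneg _ _)
                (mul_nonneg (mul_nonneg (Real.sqrt_nonneg _) hbnn) hbnn)
              calc opNorm (blk W i) * opNorm W * dF (S (t+1)) (S n)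
                  ≤ Real.sqrt d * bnd1 n d m γ * bnd1 n d m γ * (1/16) := h4
                _ = Real.sqrt d * bnd1 n d m γ ^ 2 / 16 := by ring
            have hsb : (0:ℝ) ≤ Real.sqrt d * bnd1 n d m γ ^ 2 :=
              mul_nonneg (Real.sqrt_nonneg _) (sq_nonneg _)
            rw [hξ] at hWn ⊢
            linarith
      have hDec1 : dF (S (t+2)) (S (t+1)) ≤ (1/2 : ℝ) ^ (t+1) * dF (S 1) (S 0) := by
        have hcc := hc t ihNe ihNx hMem1.1 hMem1.2
        have e : (1/2 : ℝ) ^ (t+1) * dF (S 1) (S 0)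
            = 1/2 * ((1/2 : ℝ) ^ t * dF (S 1) (S 0)) := by ring
        rw [e]
        calc dF (S (t+2)) (S (t+1)) ≤ 1/2 * dF (S (t+1)) (S t) := hcc
          _ ≤ 1/2 * ((1/2 : ℝ) ^ t * dF (S 1) (S 0)) := by linarith
      exact ⟨hMem1, hDec1, hG1⟩
  refine ⟨fun t => (key t).1, fun t ht => ?_⟩
  obtain ⟨s, rfl⟩ : ∃ s, t = s + 2 := ⟨t - 2, by omega⟩
  have e1 : s + 2 - 1 = s + 1 := rfl
  have e2 : s + 2 - 2 = s := rfl
  rw [e1, e2]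
  constructor
  · exact hc s (key s).1.1 (key s).1.2 (key (s+1)).1.1 (key (s+1)).1.2
  · exact (key (s+1)).2.1

end GOPP
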